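/- The product of two polynomials with nonnegative log-concave coefficient sequences having no internal zeros is again a polynomial with nonnegative log-concave coefficient sequence with no internal zeros. -/

import Mathlib

open Polynomial

/-- `P` has nonnegative coefficients. -/
def NonnegCoeffs (P : Polynomial ℝ) : Prop := ∀ k, 0 ≤ P.coeff k

/-- The coefficient sequence of `P` is log-concave. -/
def LogConcaveCoeffs (P : Polynomial ℝ) : Prop :=
  ∀ k, 1 ≤ k → P.coeff (k - 1) * P.coeff (k + 1) ≤ (P.coeff k) ^ 2

/-- The coefficient sequence of `P` has no internal zeros: the indices of nonzero
coefficients form a set of consecutive integers. -/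
def NoInternalZeros (P : Polynomial ℝ) : Prop :=
  ∀ i j l, i ≤ j → j ≤ l → P.coeff i ≠ 0 → P.coeff l ≠ 0 → P.coeff j ≠ 0

section Aux

open Finset

/-- Coefficients extended to integer indices. -/
private noncomputable def extC (P : Polynomial ℝ) : ℤ → ℝ :=
  fun i => if 0 ≤ i then P.coeff i.toNat else 0

private lemma extC_nonneg {P : Polynomial ℝ} (h : NonnegCoeffs P) (i : ℤ) : 0 ≤ extC P i := by
  unfold extC
  split
  · exact h _
  · exact le_refl 0

private lemma lc' {P : Polynomial ℝ} (h2 : LogConcaveCoeffs P) (k : ℕ) :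
    P.coeff k * P.coeff (k + 2) ≤ P.coeff (k + 1) ^ 2 := by
  have := h2 (k + 1) (by omega)
  simpa using this

/-- Strong log-concavity over ℕ. -/
private lemma sLC_nat {P : Polynomial ℝ} (h1 : NonnegCoeffs P) (h2 : LogConcaveCoeffs P)
    (h3 : NoInternalZeros P) :
    ∀ n m : ℕ, m ≤ n → P.coeff m * P.coeff (n + 2) ≤ P.coeff (m + 1) * P.coeff (n + 1) := by
  intro n
  induction n with
  | zero =>
      intro m hm
      interval_cases m
      have := lc' h2 0
      nlinarith [this]
  | succ n ih =>
      intro m hm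
      rcases Nat.lt_or_ge m (n + 1) with hmn | hmn
      · -- m ≤ n
        have hmn' : m ≤ n := by omega
        by_cases hz1 : P.coeff m = 0
        · rw [hz1, zero_mul]; exact mul_nonneg (h1 _) (h1 _)
        by_cases hz2 : P.coeff (n + 3) = 0
        · rw [hz2, mul_zero]; exact mul_nonneg (h1 _) (h1 _)
        have hn1 : P.coeff (n + 1) ≠ 0 := h3 m (n + 1) (n + 3) (by omega) (by omega) hz1 hz2
        have hn2 : P.coeff (n + 2) ≠ 0 := h3 m (n + 2) (n + 3) (by omega) (by omega) hz1 hz2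
        have pn1 : 0 < P.coeff (n + 1) := lt_of_le_of_ne (h1 _) (Ne.symm hn1)
        have pn2 : 0 < P.coeff (n + 2) := lt_of_le_of_ne (h1 _) (Ne.symm hn2)
        have hA := ih m hmn'
        have hB := lc' h2 (n + 1)
        have hm0 : (0:ℝ) ≤ P.coeff m := h1 m
        nlinarith [mul_le_mul_of_nonneg_left hB hm0,
          mul_le_mul_of_nonneg_right hA (le_of_lt pn2), pn1]
      · -- m = n + 1
        have hm' : m = n + 1 := by omega
        subst hm'
        have := lc' h2 (n + 1)
        nlinarith [this]

/-- Strong log-concavity over ℤ for extended coefficients. -/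
private lemma sLC_int {P : Polynomial ℝ} (h1 : NonnegCoeffs P) (h2 : LogConcaveCoeffs P)
    (h3 : NoInternalZeros P) (i j : ℤ) (hij : i ≤ j) :
    extC P (i - 1) * extC P (j + 1) ≤ extC P i * extC P j := by
  by_cases hi : 1 ≤ i
  · have e1 : (0:ℤ) ≤ i - 1 := by omega
    have e2 : (0:ℤ) ≤ j + 1 := by omega
    have e3 : (0:ℤ) ≤ i := by omega
    have e4 : (0:ℤ) ≤ j := by omega
    unfold extC
    rw [if_pos e1, if_pos e2, if_pos e3, if_pos e4]
    have t1 : (i - 1).toNat = i.toNat - 1 := by omega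
    have t2 : (j + 1).toNat = j.toNat + 1 := by omega
    rw [t1, t2]
    have key := sLC_nat h1 h2 h3 (j.toNat - 1) (i.toNat - 1) (by omega)
    have u1 : j.toNat - 1 + 2 = j.toNat + 1 := by omega
    have u2 : i.toNat - 1 + 1 = i.toNat := by omega
    have u3 : j.toNat - 1 + 1 = j.toNat := by omega
    rw [u1, u2, u3] at key
    exact key
  · have hz : extC P (i - 1) = 0 := by
      unfold extC
      rw [if_neg (by omega)]
    rw [hz, zero_mul]
    exact mul_nonneg (extC_nonneg h1 _) (extC_nonneg h1 _)

/-- Convolution: sums of extended coefficients over a large enough window give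
the coefficients of the product. -/
private lemma conv_sum (P Q : Polynomial ℝ) (N : ℕ) (T : Finset ℤ)
    (hT : Finset.Icc (0 : ℤ) (N : ℤ) ⊆ T) :
    ∑ j ∈ T, extC P j * extC Q ((N : ℤ) - j) = (P * Q).coeff N := by
  have hvanish : ∀ j ∈ T, j ∉ Finset.Icc (0 : ℤ) (N : ℤ) →
      extC P j * extC Q ((N : ℤ) - j) = 0 := by
    intro j _ hj
    rw [Finset.mem_Icc] at hj
    push_neg at hj
    by_cases h0 : (0:ℤ) ≤ j
    · have hneg : ¬ (0:ℤ) ≤ (N : ℤ) - j := by omega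
      have hz : extC Q ((N : ℤ) - j) = 0 := by unfold extC; rw [if_neg hneg]
      rw [hz, mul_zero]
    · have hz : extC P j = 0 := by unfold extC; rw [if_neg h0]
      rw [hz, zero_mul]
  rw [← Finset.sum_subset hT hvanish]
  rw [Polynomial.coeff_mul, Finset.Nat.sum_antidiagonal_eq_sum_range_succ_mk]
  apply Finset.sum_nbij' (fun j : ℤ => j.toNat) (fun k : ℕ => (k : ℤ))
  · intro j hj
    rw [Finset.mem_Icc] at hj
    rw [Finset.mem_range]
    omega
  · intro k hk
    rw [Finset.mem_range] at hk
    rw [Finset.mem_Icc]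
    omega
  · intro j hj
    rw [Finset.mem_Icc] at hj
    omega
  · intro k _
    simp
  · intro j hj
    rw [Finset.mem_Icc] at hj
    show extC P j * extC Q ((N : ℤ) - j) = P.coeff j.toNat * Q.coeff (N - j.toNat)
    unfold extC
    rw [if_pos hj.1, if_pos (by omega : (0:ℤ) ≤ (N:ℤ) - j)]
    congr 2
    omega

/-- Lagrange / Cauchy–Binet type inequality for 2×2 minors of products. -/
private lemma binet (T : Finset ℤ) (x y z w : ℤ → ℝ)
    (h : ∀ j j' : ℤ, (x j * y j' - x j' * y j) * (z j * w j' - z j' * w j) ≤ 0) :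
    (∑ j ∈ T, x j * z j) * (∑ j ∈ T, y j * w j) ≤
      (∑ j ∈ T, x j * w j) * (∑ j ∈ T, y j * z j) := by
  set f : ℤ → ℤ → ℝ := fun j j' => (x j * z j) * (y j' * w j') - (x j * w j) * (y j' * z j')
    with hf
  have hD : (∑ j ∈ T, x j * z j) * (∑ j ∈ T, y j * w j) -
      (∑ j ∈ T, x j * w j) * (∑ j ∈ T, y j * z j) = ∑ j ∈ T, ∑ j' ∈ T, f j j' := by
    rw [Finset.sum_mul_sum, Finset.sum_mul_sum, ← Finset.sum_sub_distrib]
    exact Finset.sum_congr rfl fun j _ => by rw [← Finset.sum_sub_distrib]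
  have hswap : ∑ j ∈ T, ∑ j' ∈ T, f j j' = ∑ j ∈ T, ∑ j' ∈ T, f j' j := Finset.sum_comm
  have h2 : (2 : ℝ) * ∑ j ∈ T, ∑ j' ∈ T, f j j' = ∑ j ∈ T, ∑ j' ∈ T, (f j j' + f j' j) := by
    rw [two_mul]
    nth_rewrite 2 [hswap]
    rw [← Finset.sum_add_distrib]
    exact Finset.sum_congr rfl fun j _ => (Finset.sum_add_distrib).symm
  have hnonpos : ∑ j ∈ T, ∑ j' ∈ T, (f j j' + f j' j) ≤ 0 := by
    apply Finset.sum_nonpos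
    intro j _
    apply Finset.sum_nonpos
    intro j' _
    have heq : f j j' + f j' j = (x j * y j' - x j' * y j) * (z j * w j' - z j' * w j) := by
      rw [hf]; ring
    rw [heq]
    exact h j j'
  linarith [hD, h2, hnonpos]

end Aux

/-- The product of two polynomials with nonnegative log-concave coefficient sequences
with no internal zeros again has a nonnegative log-concave coefficient sequence
with no internal zeros. -/
theorem stmt5 (P Q : Polynomial ℝ)
    (hP1 : NonnegCoeffs P) (hP2 : LogConcaveCoeffs P) (hP3 : NoInternalZeros P)
    (hQ1 : NonnegCoeffs Q) (hQ2 : LogConcaveCoeffs Q) (hQ3 : NoInternalZeros Q) :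
    NonnegCoeffs (P * Q) ∧ LogConcaveCoeffs (P * Q) ∧ NoInternalZeros (P * Q) := by
  refine ⟨?_, ?_, ?_⟩
  · -- Nonneg
    intro k
    rw [Polynomial.coeff_mul]
    exact Finset.sum_nonneg fun p _ => mul_nonneg (hP1 _) (hQ1 _)
  · -- LogConcave
    intro k hk
    set A : ℤ → ℝ := extC P with hA
    set B : ℤ → ℝ := extC Q with hB
    set T : Finset ℤ := Finset.Icc (-1 : ℤ) ((k : ℤ) + 1) with hT
    have pair : ∀ j j' : ℤ,
        (A j * A (j' + 1) - A j' * A (j + 1)) *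
          (B ((k : ℤ) - 1 - j) * B ((k : ℤ) - j') -
            B ((k : ℤ) - 1 - j') * B ((k : ℤ) - j)) ≤ 0 := by
      have main : ∀ j j' : ℤ, j < j' →
          (A j * A (j' + 1) - A j' * A (j + 1)) *
            (B ((k : ℤ) - 1 - j) * B ((k : ℤ) - j') -
              B ((k : ℤ) - 1 - j') * B ((k : ℤ) - j)) ≤ 0 := by
        intro j j' hlt
        have f1 := sLC_int hP1 hP2 hP3 (j + 1) j' (by omega)
        rw [show (j : ℤ) + 1 - 1 = j by ring] at f1
        have f2 := sLC_int hQ1 hQ2 hQ3 ((k : ℤ) - j') ((k : ℤ) - 1 - j) (by omega)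
        rw [show (k : ℤ) - j' - 1 = (k : ℤ) - 1 - j' by ring,
          show (k : ℤ) - 1 - j + 1 = (k : ℤ) - j by ring] at f2
        have h1 : A j * A (j' + 1) - A j' * A (j + 1) ≤ 0 := by
          rw [hA]; nlinarith [f1]
        have h2 : 0 ≤ B ((k : ℤ) - 1 - j) * B ((k : ℤ) - j') -
            B ((k : ℤ) - 1 - j') * B ((k : ℤ) - j) := by
          rw [hB]; nlinarith [f2]
        exact mul_nonpos_of_nonpos_of_nonneg h1 h2
      intro j j'
      rcases lt_trichotomy j j' with hlt | heq | hgt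
      · exact main j j' hlt
      · subst heq; simp
      · have := main j' j hgt
        nlinarith [this]
    have hbinet := binet T A (fun j => A (j + 1)) (fun j => B ((k : ℤ) - 1 - j))
      (fun j => B ((k : ℤ) - j)) pair
    have hTmap : T.map (addRightEmbedding (1 : ℤ)) = Finset.Icc (0 : ℤ) ((k : ℤ) + 2) := by
      rw [hT, Finset.map_add_right_Icc]
      congr 1
    -- identify the four sums
    have hS1 : ∑ j ∈ T, A j * B ((k : ℤ) - 1 - j) = (P * Q).coeff (k - 1) := by
      have h' := conv_sum P Q (k - 1) T (by
        intro t ht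
        rw [Finset.mem_Icc] at ht ⊢
        omega)
      rw [show (((k - 1 : ℕ)) : ℤ) = (k : ℤ) - 1 by omega] at h'
      rw [hA, hB]
      exact h'
    have hS3 : ∑ j ∈ T, A j * B ((k : ℤ) - j) = (P * Q).coeff k := by
      have h' := conv_sum P Q k T (by
        intro t ht
        rw [Finset.mem_Icc] at ht ⊢
        omega)
      rw [hA, hB]
      exact h'
    have hS2 : ∑ j ∈ T, A (j + 1) * B ((k : ℤ) - j) = (P * Q).coeff (k + 1) := by
      have h' := conv_sum P Q (k + 1) (Finset.Icc (0 : ℤ) ((k : ℤ) + 2)) (by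
        intro t ht
        rw [Finset.mem_Icc] at ht ⊢
        omega)
      rw [show (((k + 1 : ℕ)) : ℤ) = (k : ℤ) + 1 by push_cast; ring] at h'
      rw [← hTmap, Finset.sum_map] at h'
      rw [← h']
      apply Finset.sum_congr rfl
      intro j _
      show A (j + 1) * B ((k : ℤ) - j) =
        extC P (j + 1) * extC Q ((k : ℤ) + 1 - (j + 1))
      rw [hA, hB, show (k : ℤ) + 1 - (j + 1) = (k : ℤ) - j by ring]
    have hS4 : ∑ j ∈ T, A (j + 1) * B ((k : ℤ) - 1 - j) = (P * Q).coeff k := by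
      have h' := conv_sum P Q k (Finset.Icc (0 : ℤ) ((k : ℤ) + 2)) (by
        intro t ht
        rw [Finset.mem_Icc] at ht ⊢
        omega)
      rw [← hTmap, Finset.sum_map] at h'
      rw [← h']
      apply Finset.sum_congr rfl
      intro j _
      show A (j + 1) * B ((k : ℤ) - 1 - j) =
        extC P (j + 1) * extC Q ((k : ℤ) - (j + 1))
      rw [hA, hB, show (k : ℤ) - (j + 1) = (k : ℤ) - 1 - j by ring]
    rw [hS1, hS2, hS3, hS4] at hbinet
    nlinarith [hbinet]
  · -- NoInternalZeros
    intro i j l hij hjl hi hl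
    rw [Polynomial.coeff_mul] at hi hl
    obtain ⟨⟨i1, i2⟩, hi_mem, hi_ne⟩ := Finset.exists_ne_zero_of_sum_ne_zero hi
    obtain ⟨⟨l1, l2⟩, hl_mem, hl_ne⟩ := Finset.exists_ne_zero_of_sum_ne_zero hl
    rw [Finset.HasAntidiagonal.mem_antidiagonal] at hi_mem hl_mem
    have hi1 : P.coeff i1 ≠ 0 := fun h => hi_ne (by rw [show ((i1, i2) : ℕ × ℕ).1 = i1 from rfl, h, zero_mul])
    have hi2 : Q.coeff i2 ≠ 0 := fun h => hi_ne (by rw [show ((i1, i2) : ℕ × ℕ).2 = i2 from rfl, h, mul_zero])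
    have hl1 : P.coeff l1 ≠ 0 := fun h => hl_ne (by rw [show ((l1, l2) : ℕ × ℕ).1 = l1 from rfl, h, zero_mul])
    have hl2 : Q.coeff l2 ≠ 0 := fun h => hl_ne (by rw [show ((l1, l2) : ℕ × ℕ).2 = l2 from rfl, h, mul_zero])
    set j1 : ℕ := max (min i1 l1) (j - max i2 l2) with hj1def
    set j2 : ℕ := j - j1 with hj2def
    have hj1j2 : j1 + j2 = j := by omega
    have hminmaxP : P.coeff (min i1 l1) ≠ 0 ∧ P.coeff (max i1 l1) ≠ 0 := by
      rcases le_total i1 l1 with h | h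
      · rw [min_eq_left h, max_eq_right h]; exact ⟨hi1, hl1⟩
      · rw [min_eq_right h, max_eq_left h]; exact ⟨hl1, hi1⟩
    have hminmaxQ : Q.coeff (min i2 l2) ≠ 0 ∧ Q.coeff (max i2 l2) ≠ 0 := by
      rcases le_total i2 l2 with h | h
      · rw [min_eq_left h, max_eq_right h]; exact ⟨hi2, hl2⟩
      · rw [min_eq_right h, max_eq_left h]; exact ⟨hl2, hi2⟩
    have hPj1 : P.coeff j1 ≠ 0 :=
      hP3 (min i1 l1) j1 (max i1 l1) (by omega) (by omega) hminmaxP.1 hminmaxP.2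
    have hQj2 : Q.coeff j2 ≠ 0 :=
      hQ3 (min i2 l2) j2 (max i2 l2) (by omega) (by omega) hminmaxQ.1 hminmaxQ.2
    have hPpos : 0 < P.coeff j1 := lt_of_le_of_ne (hP1 _) (Ne.symm hPj1)
    have hQpos : 0 < Q.coeff j2 := lt_of_le_of_ne (hQ1 _) (Ne.symm hQj2)
    have hle : P.coeff j1 * Q.coeff j2 ≤ (P * Q).coeff j := by
      rw [Polynomial.coeff_mul]
      exact Finset.single_le_sum (f := fun p : ℕ × ℕ => P.coeff p.1 * Q.coeff p.2) (a := ((j1, j2) : ℕ × ℕ))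
        (fun p _ => mul_nonneg (hP1 _) (hQ1 _))
        (by rw [Finset.HasAntidiagonal.mem_antidiagonal]; exact hj1j2)
    exact ne_of_gt (lt_of_lt_of_le (mul_pos hPpos hQpos) hle)
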